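/- Let A = ⨁_{a ∈ ℤ/N} A_a be a ℤ/N-graded algebra over ℂ with A_0 central and commutative semisimple, equipped with a positive-definite Hermitian form ⟨c,d⟩ = τ(cd*) for a semilinear anti-involution * with A_a* = A_{-a} and τ supported in degree 0. Let ρ be a character of A_0 with minimal idempotent e_ρ such that e_ρ A_a is 1-dimensional for every a. Then every nonzero homogeneous element m ∈ e_ρ A_a is invertible in the algebra e_ρ A, and there exists m ∈ e_ρ A_1 with m^N = e_ρ; consequently ρ extends to a character ρ̃ : A → ℂ, and any two such extensions differ on A_1 by multiplication by an N-th root of unity. -/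

import Mathlib

set_option maxHeartbeats 1000000
set_option synthInstance.maxHeartbeats 1000000


/-- Let `A = ⨁_{a ∈ ℤ/N} A_a` be a `ℤ/N`-graded based `*`-algebra over `ℂ`
(semilinear anti-involution `s` with `s(A_a) ⊆ A_{-a}`, trace `τ` supported in degree `0`
with `⟨c,d⟩ = τ (c * s d)` positive definite) with `A_0` central. Let `ρ` be a character of
`A_0` with minimal idempotent `e` such that `e·A_a` is one-dimensional for every `a`. Then
every nonzero `m ∈ e·A_a` is invertible in the algebra `e·A` (with unit `e`); there exists
`m ∈ e·A_1` with `m ^ N = e`; consequently `ρ` extends to a character `ρ̃ : A → ℂ`, and any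
two such extensions differ on `A_1` by multiplication by an `N`-th root of unity. -/
theorem stmt7 {A : Type*} [Ring A] [Algebra ℂ A] [FiniteDimensional ℂ A]
    {N : ℕ} [NeZero N] (𝒜 : ZMod N → Submodule ℂ A) [GradedAlgebra 𝒜]
    (hcentral : ∀ x ∈ 𝒜 0, ∀ y : A, x * y = y * x)
    (τ : A →ₗ[ℂ] ℂ) (s : A → A)
    (hs_add : ∀ x y : A, s (x + y) = s x + s y)
    (hs_smul : ∀ (c : ℂ) (x : A), s (c • x) = (starRingEnd ℂ) c • s x)
    (hs_mul : ∀ x y : A, s (x * y) = s y * s x)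
    (hs_invol : ∀ x : A, s (s x) = x)
    (hs_grade : ∀ a : ZMod N, ∀ x ∈ 𝒜 a, s x ∈ 𝒜 (-a))
    (hsupp : ∀ a : ZMod N, a ≠ 0 → ∀ x ∈ 𝒜 a, τ x = 0)
    (hsym : ∀ x y : A, τ (x * y) = τ (y * x))
    (hpos : ∀ x : A, x ≠ 0 → 0 < (τ (x * s x)).re ∧ (τ (x * s x)).im = 0)
    (e : A) (he : e ∈ 𝒜 0) (hidem : IsIdempotentElem e) (hne : e ≠ 0)
    (ρ : A → ℂ) (hρ : ∀ c ∈ 𝒜 0, c * e = ρ c • e)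
    (hdim : ∀ a : ZMod N, Module.finrank ℂ ((𝒜 a).map (LinearMap.mulLeft ℂ e)) = 1) :
    (∀ a : ZMod N, ∀ m ∈ (𝒜 a).map (LinearMap.mulLeft ℂ e), m ≠ 0 →
        ∃ y ∈ (𝒜 (-a)).map (LinearMap.mulLeft ℂ e), m * y = e ∧ y * m = e) ∧
    (∃ m ∈ (𝒜 1).map (LinearMap.mulLeft ℂ e), m ^ N = e) ∧
    (∃ ρ' : A →ₐ[ℂ] ℂ, ∀ c ∈ 𝒜 0, ρ' c = ρ c) ∧
    (∀ ρ₁ ρ₂ : A →ₐ[ℂ] ℂ, (∀ c ∈ 𝒜 0, ρ₁ c = ρ c) → (∀ c ∈ 𝒜 0, ρ₂ c = ρ c) →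
      ∃ ω : ℂ, ω ^ N = 1 ∧ ∀ m ∈ 𝒜 1, ρ₂ m = ω * ρ₁ m) := by
  classical
  set V : ZMod N → Submodule ℂ A := fun a => (𝒜 a).map (LinearMap.mulLeft ℂ e) with hV
  have hidem' : e * e = e := hidem
  have hcen_e : ∀ y : A, e * y = y * e := fun y => hcentral e he y
  have hVmem : ∀ (a : ZMod N) (x : A), x ∈ 𝒜 a → e * x ∈ V a := by
    intro a x hx
    exact ⟨x, hx, rfl⟩
  have hVsub : ∀ (a : ZMod N), ∀ w ∈ V a, w ∈ 𝒜 a ∧ e * w = w := by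
    rintro a w ⟨x, hx, rfl⟩
    have h1 : (LinearMap.mulLeft ℂ e) x = e * x := rfl
    rw [h1]
    constructor
    · have := SetLike.mul_mem_graded he hx
      rwa [zero_add] at this
    · rw [← mul_assoc, hidem']
  -- each nonzero element of V a spans it
  have hmemspan : ∀ (a : ZMod N) (v : A), v ∈ V a → v ≠ 0 → ∀ w ∈ V a, ∃ c : ℂ, w = c • v := by
    intro a v hv hv0 w hw
    have hle : (ℂ ∙ v) ≤ V a := by
      rw [Submodule.span_singleton_le_iff_mem]; exact hv
    have heq : (ℂ ∙ v) = V a := by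
      apply Submodule.eq_of_le_of_finrank_eq hle
      rw [finrank_span_singleton hv0, hdim a]
    rw [← heq] at hw
    obtain ⟨c, hc⟩ := Submodule.mem_span_singleton.mp hw
    exact ⟨c, hc.symm⟩
  -- Part 1: right inverses
  have hinv1 : ∀ (a : ZMod N), ∀ m ∈ V a, m ≠ 0 → ∃ y ∈ V (-a), m * y = e := by
    intro a m hm hm0
    obtain ⟨hmA, hem⟩ := hVsub a m hm
    have hsm : s m ∈ 𝒜 (-a) := hs_grade a m hmA
    have hmsm : m * s m ∈ 𝒜 0 := by
      have := SetLike.mul_mem_graded hmA hsm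
      rwa [add_neg_cancel] at this
    have hkey : m * s m = ρ (m * s m) • e := by
      have h1 : (m * s m) * e = ρ (m * s m) • e := hρ _ hmsm
      have h2 : (m * s m) * e = m * s m := by
        rw [hcentral (m * s m) hmsm e, ← mul_assoc, hem]
      calc m * s m = (m * s m) * e := h2.symm
        _ = ρ (m * s m) • e := h1
    have hmsm0 : m * s m ≠ 0 := by
      intro h
      have := (hpos m hm0).1
      rw [h, map_zero] at this
      simp at this
    have hcne : ρ (m * s m) ≠ 0 := by
      intro h
      rw [h, zero_smul] at hkey
      exact hmsm0 hkey
    refine ⟨(ρ (m * s m))⁻¹ • (e * s m), Submodule.smul_mem _ _ (hVmem _ _ hsm), ?_⟩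
    have h3 : e * (m * s m) = ρ (m * s m) • e := by
      rw [← mul_assoc, hem]; exact hkey
    rw [mul_smul_comm, ← mul_assoc, ← hcen_e, mul_assoc, h3, smul_smul,
      inv_mul_cancel₀ hcne, one_smul]
  -- two-sided inverses
  have hinv : ∀ (a : ZMod N), ∀ m ∈ V a, m ≠ 0 →
      ∃ y ∈ V (-a), m * y = e ∧ y * m = e := by
    intro a m hm hm0
    obtain ⟨y, hy, hmy⟩ := hinv1 a m hm hm0
    have hy0 : y ≠ 0 := by
      rintro rfl; rw [mul_zero] at hmy; exact hne hmy.symm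
    obtain ⟨y', hy', hyy'⟩ := hinv1 (-a) y hy hy0
    have hye : e * y = y := (hVsub _ y hy).2
    have h4 : (y * m) * e = y * m := by
      rw [← hcen_e, ← mul_assoc, hye]
    have h5 : y * m = e := by
      calc y * m = (y * m) * (y * y') := by rw [hyy', h4]
        _ = y * (m * y) * y' := by rw [← mul_assoc, mul_assoc y m y]
        _ = (e * y) * y' := by rw [hmy, hcen_e]
        _ = e := by rw [hye, hyy']
    exact ⟨y, hy, hmy, h5⟩
  -- powers lemma
  have hpowgen : ∀ u v : A, u * v = e → ∀ k : ℕ, e * (u ^ k * v ^ k) = e := by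
    intro u v huv k
    induction k with
    | zero => simp [hidem']
    | succ k ih =>
      have h1 : u ^ (k + 1) * v ^ (k + 1) = u ^ k * e * v ^ k := by
        rw [pow_succ, pow_succ', mul_assoc, ← mul_assoc u v, huv, ← mul_assoc]
      rw [h1, ← hcen_e, ← mul_assoc, ← mul_assoc, hidem', mul_assoc]
      exact ih
  -- Part 2: existence of m with m ^ N = e
  have heV0 : e ∈ V 0 := by
    have := hVmem 0 e he; rwa [hidem'] at this
  obtain ⟨m₁, hm₁, hm₁0⟩ : ∃ m₁ ∈ V 1, m₁ ≠ 0 := by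
    have hVb : V 1 ≠ ⊥ := by
      intro h
      have h2 : Module.finrank ℂ (V 1) = 1 := hdim 1
      rw [h, finrank_bot] at h2
      exact zero_ne_one h2
    exact (Submodule.ne_bot_iff _).mp hVb
  obtain ⟨hm₁A, hem₁⟩ := hVsub 1 m₁ hm₁
  obtain ⟨y₁, hy₁, hm₁y₁, hy₁m₁⟩ := hinv 1 m₁ hm₁ hm₁0
  have hm₁N : m₁ ^ N ∈ V 0 := by
    refine ⟨m₁ ^ N, ?_, ?_⟩
    · have := SetLike.pow_mem_graded N hm₁A
      rwa [nsmul_eq_mul, mul_one, ZMod.natCast_self] at this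
    · show e * m₁ ^ N = m₁ ^ N
      obtain ⟨N', rfl⟩ : ∃ N', N = N' + 1 :=
        ⟨N - 1, (Nat.succ_pred_eq_of_pos (NeZero.pos N)).symm⟩
      rw [pow_succ', ← mul_assoc, hem₁]
  obtain ⟨c, hc⟩ := hmemspan 0 e heV0 hne (m₁ ^ N) hm₁N
  have hc0 : c ≠ 0 := by
    rintro rfl
    rw [zero_smul] at hc
    have := hpowgen m₁ y₁ hm₁y₁ N
    rw [hc, zero_mul, mul_zero] at this
    exact hne this.symm
  obtain ⟨d, hd⟩ := IsAlgClosed.exists_pow_nat_eq c (NeZero.pos N)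
  have hd0 : d ≠ 0 := by
    rintro rfl; rw [zero_pow (NeZero.ne N)] at hd; exact hc0 hd.symm
  set m : A := d⁻¹ • m₁ with hmdef
  have hmV : m ∈ V 1 := Submodule.smul_mem _ _ hm₁
  have hmN : m ^ N = e := by
    rw [hmdef, smul_pow, hc, smul_smul, inv_pow, hd, inv_mul_cancel₀ hc0, one_smul]
  have hm0 : m ≠ 0 := by
    rintro h
    rw [h, zero_pow (NeZero.ne N)] at hmN
    exact hne hmN.symm
  obtain ⟨hmA, hem⟩ := hVsub 1 m hmV
  refine ⟨hinv, ⟨m, hmV, hmN⟩, ?_, ?_⟩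
  · -- Part 3: extension of ρ to a character of A
    obtain ⟨y, hyV, hmy, hym⟩ := hinv 1 m hmV hm0
    set b : ZMod N → A := fun a => e * m ^ a.val with hbdef
    have hb0 : b 0 = e := by simp [hbdef, ZMod.val_zero]
    have hbV : ∀ a : ZMod N, b a ∈ V a := by
      intro a
      apply hVmem
      have := SetLike.pow_mem_graded a.val hmA
      rwa [nsmul_eq_mul, mul_one, ZMod.natCast_rightInverse a] at this
    have hbne : ∀ a : ZMod N, b a ≠ 0 := by
      intro a h
      have hba : b a = e * m ^ a.val := rfl
      have h1 := hpowgen m y hmy a.val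
      rw [← mul_assoc, ← hba, h, zero_mul] at h1
      exact hne h1.symm
    have hperiod : ∀ k : ℕ, e * m ^ (k + N) = e * m ^ k := by
      intro k
      rw [pow_add, hmN, ← mul_assoc, ← hcen_e, ← mul_assoc, hidem']
    have hbmul : ∀ a a' : ZMod N, b a * b a' = b (a + a') := by
      intro a a'
      have h1 : b a * b a' = e * m ^ (a.val + a'.val) := by
        show (e * m ^ a.val) * (e * m ^ a'.val) = _
        rw [mul_assoc, ← mul_assoc (m ^ a.val) e, ← hcen_e, mul_assoc,
          ← mul_assoc e e, hidem', ← pow_add]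
      rcases lt_or_ge (a.val + a'.val) N with hlt | hge
      · rw [h1, show b (a + a') = e * m ^ (a + a').val from rfl, ZMod.val_add_of_lt hlt]
      · have h2 := ZMod.val_add_val_of_le hge
        rw [h1, h2, hperiod]
    have hfex : ∀ a : ZMod N, ∃ f : Module.Dual ℂ A, f (b a) = 1 := by
      intro a
      have h1 : ¬ ∀ φ : Module.Dual ℂ A, φ (b a) = 0 := by
        rw [Module.forall_dual_apply_eq_zero_iff]
        exact hbne a
      push_neg at h1
      obtain ⟨φ, hφ⟩ := h1
      exact ⟨(φ (b a))⁻¹ • φ, by simp [inv_mul_cancel₀ hφ]⟩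
    choose f hf1 using hfex
    let g : A →ₗ[ℂ] ℂ :=
      { toFun := fun x => ∑ a : ZMod N, f a (e * (DirectSum.decompose 𝒜 x a : A))
        map_add' := by
          intro x y'
          simp [DirectSum.decompose_add, DirectSum.add_apply, Submodule.coe_add,
            mul_add, map_add, Finset.sum_add_distrib]
        map_smul' := by
          intro c x
          have h : ∀ a : ZMod N, ((DirectSum.decompose 𝒜 (c • x) a : A))
              = c • ((DirectSum.decompose 𝒜 x a : A)) := by
            intro a
            rw [DirectSum.decompose_smul]
            rfl
          simp [h, DirectSum.smul_apply, SetLike.val_smul, mul_smul_comm, map_smul,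
            Finset.mul_sum] }
    have hg_hom : ∀ (a : ZMod N) (x : A), x ∈ 𝒜 a → g x = f a (e * x) := by
      intro a x hx
      show (∑ a' : ZMod N, f a' (e * (DirectSum.decompose 𝒜 x a' : A))) = f a (e * x)
      rw [Finset.sum_eq_single a]
      · rw [DirectSum.decompose_of_mem_same 𝒜 hx]
      · intro a' _ ha'
        rw [DirectSum.decompose_of_mem_ne 𝒜 hx (Ne.symm ha')]
        simp
      · intro h; exact absurd (Finset.mem_univ a) h
    have hg_one : g 1 = 1 := by
      rw [hg_hom 0 1 (SetLike.one_mem_graded 𝒜), mul_one, ← hb0, hf1]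
    have hg_mul_hom : ∀ (a : ZMod N) (x : A), x ∈ 𝒜 a → ∀ (a' : ZMod N) (y' : A),
        y' ∈ 𝒜 a' → g (x * y') = g x * g y' := by
      intro a x hx a' y' hy'
      have hxy : x * y' ∈ 𝒜 (a + a') := SetLike.mul_mem_graded hx hy'
      have hprod : (e * x) * (e * y') = e * (x * y') := by
        rw [mul_assoc, ← mul_assoc x e, ← hcen_e, mul_assoc, ← mul_assoc e e, hidem']
      obtain ⟨c₁, hc₁⟩ := hmemspan a (b a) (hbV a) (hbne a) (e * x) (hVmem a x hx)
      obtain ⟨c₂, hc₂⟩ := hmemspan a' (b a') (hbV a') (hbne a') (e * y') (hVmem a' y' hy')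
      have hfc₁ : f a (e * x) = c₁ := by
        rw [hc₁, map_smul, smul_eq_mul, hf1, mul_one]
      have hfc₂ : f a' (e * y') = c₂ := by
        rw [hc₂, map_smul, smul_eq_mul, hf1, mul_one]
      have h3 : e * (x * y') = (c₁ * c₂) • b (a + a') := by
        rw [← hprod, hc₁, hc₂, smul_mul_smul_comm, hbmul]
      rw [hg_hom _ _ hxy, hg_hom a x hx, hg_hom a' y' hy', hfc₁, hfc₂, h3,
        map_smul, smul_eq_mul, hf1, mul_one]
    have hdecomp : ∀ x : A, (∑ a : ZMod N, ((DirectSum.decompose 𝒜 x a : A))) = x := by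
      intro x
      conv_rhs => rw [← DirectSum.sum_support_decompose 𝒜 x]
      refine (Finset.sum_subset (Finset.subset_univ _) ?_).symm
      intro a _ ha
      rw [DFinsupp.notMem_support_iff.mp ha, ZeroMemClass.coe_zero]
    have hg_mul : ∀ x y' : A, g (x * y') = g x * g y' := by
      intro x y'
      rw [← hdecomp x, ← hdecomp y', Finset.sum_mul_sum]
      simp only [map_sum]
      rw [Finset.sum_mul_sum]
      refine Finset.sum_congr rfl fun a _ => Finset.sum_congr rfl fun a' _ => ?_
      exact hg_mul_hom a _ (SetLike.coe_mem _) a' _ (SetLike.coe_mem _)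
    refine ⟨AlgHom.ofLinearMap g hg_one hg_mul, ?_⟩
    intro c hc
    show g c = ρ c
    rw [hg_hom 0 c hc, ← hcentral c hc e, hρ c hc, map_smul, smul_eq_mul, ← hb0,
      hf1, mul_one]
  · -- Part 4: uniqueness up to N-th root of unity
    intro ρ₁ ρ₂ h₁ h₂
    have hρe : ρ e = 1 := by
      have h1 : e * e = ρ e • e := hρ e he
      rw [hidem'] at h1
      have h2 : (1 - ρ e) • e = 0 := by
        rw [sub_smul, one_smul, ← h1, sub_self]
      rcases smul_eq_zero.mp h2 with h | h
      · linear_combination -h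
      · exact absurd h hne
    have hρ₁e : ρ₁ e = 1 := by rw [h₁ e he, hρe]
    have hρ₂e : ρ₂ e = 1 := by rw [h₂ e he, hρe]
    have hu₁ : ρ₁ m ^ N = 1 := by rw [← map_pow, hmN, hρ₁e]
    have hu₂ : ρ₂ m ^ N = 1 := by rw [← map_pow, hmN, hρ₂e]
    have hρ₁m : ρ₁ m ≠ 0 := by
      intro h; rw [h, zero_pow (NeZero.ne N)] at hu₁; exact one_ne_zero hu₁.symm
    refine ⟨ρ₂ m / ρ₁ m, by rw [div_pow, hu₁, hu₂, div_one], ?_⟩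
    intro m' hm'
    obtain ⟨c', hc'⟩ := hmemspan 1 m hmV hm0 (e * m') (hVmem 1 m' hm')
    have e₁ : ρ₁ m' = c' * ρ₁ m := by
      have := congrArg ρ₁ hc'
      rwa [map_mul, hρ₁e, one_mul, map_smul, smul_eq_mul] at this
    have e₂ : ρ₂ m' = c' * ρ₂ m := by
      have := congrArg ρ₂ hc'
      rwa [map_mul, hρ₂e, one_mul, map_smul, smul_eq_mul] at this
    rw [e₁, e₂]
    field_simp
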